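/- arXiv:1210.4654 — 3 statements merged into one kernel-verified Lean document; each statement's English description precedes it below -/
import Mathlib

section
/- Sensitivity-analysis identity for the counterfactual conditional mean (key lemma of Section 8): under consistency and exposure ignorability, for every m ∈ 𝒮 and x with P(X=x) > 0, E(Y_{1,m} | E=0, M=m, X=x) = E(Y | E=1, M=m, X=x) − t(1,m,x)·(1 − P(M=m|E=1,X=x)) + t(0,m,x)·(1 − P(M=m|E=0,X=x)), where the selection-bias function is t(e,m,x) := E(Y_{1,m} | E=e, M=m, X=x) − E(Y_{1,m} | E=e, M≠m, X=x). -/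
open MeasureTheory ProbabilityTheory

/-- Conditional probability of `B` given the event `A`: `P(B ∩ A) / P(A)`. -/
noncomputable def cP {Ω : Type*} [MeasurableSpace Ω] (μ : Measure Ω) (B A : Set Ω) : ℝ :=
  (μ (B ∩ A)).toReal / (μ A).toReal

/-- Conditional expectation of `Y` given the event `A`: `E[Y·1_A] / P(A)`. -/
noncomputable def cE {Ω : Type*} [MeasurableSpace Ω] (μ : Measure Ω) (Y : Ω → ℝ) (A : Set Ω) : ℝ :=
  (∫ ω in A, Y ω ∂μ) / (μ A).toReal

/-- Independence under the conditional measure factorizes set integrals. -/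
lemma indep_setIntegral_eq {Ω : Type*} [MeasurableSpace Ω] (μ : Measure Ω)
    [IsProbabilityMeasure μ]
    (s : Set Ω) (hx : μ s ≠ 0)
    (f : Ω → ℝ) (hf : Integrable f μ) (E : Ω → Bool) (hE : Measurable E)
    (hind : IndepFun f E (μ[|s])) (e : Bool) :
    (∫ ω in E ⁻¹' {e} ∩ s, f ω ∂μ) * (μ s).toReal
      = (∫ ω in s, f ω ∂μ) * (μ (E ⁻¹' {e} ∩ s)).toReal := by
  set ν := μ[|s] with hν
  have hEe : MeasurableSet (E ⁻¹' {e}) := hE (measurableSet_singleton e)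
  have hfν : Integrable f ν := by
    rw [hν, ProbabilityTheory.cond]
    exact (hf.restrict).smul_measure (by simp [hx])
  set g : Ω → ℝ := (E ⁻¹' {e}).indicator (fun _ => (1:ℝ)) with hg
  have hgν : Integrable g ν := (integrable_const 1).indicator hEe
  have hcomp : g = (fun b => if b = e then (1:ℝ) else 0) ∘ E := by
    funext ω; by_cases h : E ω = e <;> simp [hg, Set.indicator_apply, h]
  have hind2 : IndepFun f g ν := by
    rw [hcomp]
    exact hind.comp measurable_id (measurable_of_countable _)
  have hmul := hind2.integral_mul_eq_mul_integral hfν.aestronglyMeasurable hgν.aestronglyMeasurable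
  have hfg : f * g = (E ⁻¹' {e}).indicator f := by
    funext ω; by_cases h : ω ∈ E ⁻¹' {e} <;> simp [hg, Set.indicator_apply, h]
  rw [hfg] at hmul
  rw [hν, ProbabilityTheory.cond, integral_smul_measure, integral_smul_measure,
    integral_smul_measure, integral_indicator hEe, Measure.restrict_restrict hEe,
    setIntegral_indicator hEe, setIntegral_const, Set.inter_comm s] at hmul
  have hsne : μ s ≠ ⊤ := measure_ne_top μ s
  have hc : (μ s).toReal ≠ 0 := ENNReal.toReal_ne_zero.2 ⟨hx, hsne⟩
  rw [ENNReal.toReal_inv, smul_eq_mul, smul_eq_mul, smul_eq_mul] at hmul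
  have hfin : (μ (E ⁻¹' {e} ∩ s)) ≠ ⊤ := measure_ne_top μ _
  field_simp at hmul
  simp only [smul_eq_mul, mul_one, measureReal_def] at hmul
  apply mul_right_cancel₀ hc
  linear_combination (μ s).toReal * hmul

/-- Pure algebra for the sensitivity identity. -/
lemma sens_alg (JB JC Js nB nC c : ℝ) (hB : 0 < nB) (hC : 0 < nC) (hc : 0 < c)
    (h : (JB + JC) * c = Js * (nB + nC)) :
    JB / nB - (JB / nB - JC / nC) * (1 - nB / (nB + nC)) = Js / c := by
  have hA : 0 < nB + nC := by linarith
  have h1 : JB / nB - (JB / nB - JC / nC) * (1 - nB / (nB + nC))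
      = (JB + JC) / (nB + nC) := by
    field_simp
    ring
  rw [h1, div_eq_div_iff hA.ne' hc.ne']
  linarith [h]

/-- sensitivity-analysis identity for the counterfactual conditional mean:
under consistency and exposure ignorability, for all `m, x` with `P(X=x) > 0`,
`E(Y_{1,m}|E=0,M=m,X=x) = E(Y|E=1,M=m,X=x) − t(1,m,x)·(1 − P(M=m|E=1,X=x))
  + t(0,m,x)·(1 − P(M=m|E=0,X=x))`. -/
theorem sensitivity_counterfactual_mean_identity
    {Ω 𝒳 𝒮 : Type*} [MeasurableSpace Ω] [Fintype 𝒳] [Fintype 𝒮] [Nontrivial 𝒮]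
    [MeasurableSpace 𝒳] [MeasurableSingletonClass 𝒳]
    [MeasurableSpace 𝒮] [MeasurableSingletonClass 𝒮]
    (μ : Measure Ω) [IsProbabilityMeasure μ]
    (X : Ω → 𝒳) (M : Ω → 𝒮) (E : Ω → Bool) (Y : Ω → ℝ)
    (hX : Measurable X) (hM : Measurable M) (hE : Measurable E)
    (hY : Integrable Y μ)
    -- counterfactuals: `Yc m = Y_{1,m}`
    (Yc : 𝒮 → Ω → ℝ) (hYc : ∀ m, Integrable (Yc m) μ)
    -- positivity
    (hposE : ∀ (e : Bool) (x : 𝒳), μ (X ⁻¹' {x}) ≠ 0 → μ (E ⁻¹' {e} ∩ X ⁻¹' {x}) ≠ 0)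
    (hposM : ∀ (m : 𝒮) (e : Bool) (x : 𝒳), μ (X ⁻¹' {x}) ≠ 0 →
      μ (M ⁻¹' {m} ∩ E ⁻¹' {e} ∩ X ⁻¹' {x}) ≠ 0)
    -- consistency: Y_{1,m} = Y a.s. on {E=1, M=m}
    (hconsY : ∀ m : 𝒮, ∀ᵐ ω ∂μ, E ω = true → M ω = m → Yc m ω = Y ω)
    -- exposure ignorability: (Y_{1,m})_{m∈𝒮} ⫫ E | X
    (hign : ∀ x : 𝒳, μ (X ⁻¹' {x}) ≠ 0 →
      IndepFun (fun ω => fun m => Yc m ω) E (μ[|X ⁻¹' {x}]))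
    -- selection-bias function: t(e,m,x) = E(Y_{1,m}|E=e,M=m,X=x) − E(Y_{1,m}|E=e,M≠m,X=x)
    (t : Bool → 𝒮 → 𝒳 → ℝ)
    (ht : ∀ (e : Bool) (m : 𝒮) (x : 𝒳),
      t e m x = cE μ (Yc m) (E ⁻¹' {e} ∩ M ⁻¹' {m} ∩ X ⁻¹' {x}) -
        cE μ (Yc m) (E ⁻¹' {e} ∩ {ω | M ω ≠ m} ∩ X ⁻¹' {x})) :
    ∀ (m : 𝒮) (x : 𝒳), μ (X ⁻¹' {x}) ≠ 0 →
      cE μ (Yc m) (E ⁻¹' {false} ∩ M ⁻¹' {m} ∩ X ⁻¹' {x}) =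
        cE μ Y (E ⁻¹' {true} ∩ M ⁻¹' {m} ∩ X ⁻¹' {x}) -
          t true m x * (1 - cP μ (M ⁻¹' {m}) (E ⁻¹' {true} ∩ X ⁻¹' {x})) +
          t false m x * (1 - cP μ (M ⁻¹' {m}) (E ⁻¹' {false} ∩ X ⁻¹' {x})) := by
  intro m x hx
  set s : Set Ω := X ⁻¹' {x} with hsdef
  have hs : MeasurableSet s := hX (measurableSet_singleton x)
  have hMm : MeasurableSet (M ⁻¹' {m}) := hM (measurableSet_singleton m)
  have hMne : MeasurableSet {ω | M ω ≠ m} := (hMm.compl).congr (by ext ω; simp)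
  have hc : 0 < (μ s).toReal := ENNReal.toReal_pos hx (measure_ne_top μ s)
  -- independence of Yc m and E under the conditional measure
  have hindm : IndepFun (Yc m) E (μ[|s]) :=
    (hign x hx).comp (measurable_pi_apply m) measurable_id
  -- key facts for each exposure level e
  have key : ∀ e : Bool,
      cE μ (Yc m) (E ⁻¹' {e} ∩ M ⁻¹' {m} ∩ s) -
        t e m x * (1 - cP μ (M ⁻¹' {m}) (E ⁻¹' {e} ∩ s))
      = (∫ ω in s, Yc m ω ∂μ) / (μ s).toReal := by
    intro e
    have hEe : MeasurableSet (E ⁻¹' {e}) := hE (measurableSet_singleton e)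
    set B : Set Ω := E ⁻¹' {e} ∩ M ⁻¹' {m} ∩ s with hBdef
    set C : Set Ω := E ⁻¹' {e} ∩ {ω | M ω ≠ m} ∩ s with hCdef
    set A : Set Ω := E ⁻¹' {e} ∩ s with hAdef
    have hBmeas : MeasurableSet B := ((hEe.inter hMm).inter hs)
    have hCmeas : MeasurableSet C := ((hEe.inter hMne).inter hs)
    have hdisj : Disjoint B C := by
      rw [Set.disjoint_left]
      rintro ω ⟨⟨-, h1⟩, -⟩ ⟨⟨-, h2⟩, -⟩
      exact h2 h1
    have hunion : B ∪ C = A := by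
      ext ω
      by_cases h : M ω = m <;> simp [hBdef, hCdef, hAdef, h]
    -- masses
    have hBne : μ B ≠ 0 := by
      have h0 := hposM m e x hx
      have : M ⁻¹' {m} ∩ E ⁻¹' {e} ∩ s = B := by
        rw [hBdef, Set.inter_comm (M ⁻¹' {m}) (E ⁻¹' {e})]
      rwa [this] at h0
    have hCne : μ C ≠ 0 := by
      obtain ⟨m', hm'⟩ := exists_ne m
      have h0 := hposM m' e x hx
      have hsub : M ⁻¹' {m'} ∩ E ⁻¹' {e} ∩ s ⊆ C := by
        rintro ω ⟨⟨hM', hEω⟩, hsω⟩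
        exact ⟨⟨hEω, by simp only [Set.mem_setOf_eq]; rw [Set.mem_preimage, Set.mem_singleton_iff] at hM'; rw [hM']; exact hm'⟩, hsω⟩
      exact fun h => h0 (measure_mono_null hsub h)
    have hnB : 0 < (μ B).toReal := ENNReal.toReal_pos hBne (measure_ne_top μ B)
    have hnC : 0 < (μ C).toReal := ENNReal.toReal_pos hCne (measure_ne_top μ C)
    have hnA : (μ A).toReal = (μ B).toReal + (μ C).toReal := by
      rw [← hunion, measure_union hdisj hCmeas,
        ENNReal.toReal_add (measure_ne_top μ B) (measure_ne_top μ C)]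
    -- integral decomposition
    have hJA : ∫ ω in A, Yc m ω ∂μ = (∫ ω in B, Yc m ω ∂μ) + ∫ ω in C, Yc m ω ∂μ := by
      rw [← hunion, setIntegral_union hdisj hCmeas
        ((hYc m).integrableOn) ((hYc m).integrableOn)]
    -- independence step
    have hindep := indep_setIntegral_eq μ s hx (Yc m) (hYc m) E hE hindm e
    rw [← hAdef] at hindep
    rw [hJA] at hindep
    -- conditional probability
    have hcP : cP μ (M ⁻¹' {m}) A = (μ B).toReal / (μ A).toReal := by
      have : M ⁻¹' {m} ∩ A = B := by
        ext ω; simp [hAdef, hBdef]; tauto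
      rw [cP, this]
    rw [ht e m x, ← hsdef, ← hBdef, ← hCdef, hcP, hnA]
    rw [cE, cE]
    exact sens_alg _ _ _ _ _ _ hnB hnC hc (by rw [← hnA]; exact hindep)
  -- consistency: on {E = true, M = m, X = x} we may replace Yc m by Y
  have hcons : cE μ Y (E ⁻¹' {true} ∩ M ⁻¹' {m} ∩ s)
      = cE μ (Yc m) (E ⁻¹' {true} ∩ M ⁻¹' {m} ∩ s) := by
    have hmeas : MeasurableSet (E ⁻¹' {true} ∩ M ⁻¹' {m} ∩ s) :=
      ((hE (measurableSet_singleton true)).inter hMm).inter hs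
    have : ∫ ω in E ⁻¹' {true} ∩ M ⁻¹' {m} ∩ s, Yc m ω ∂μ
        = ∫ ω in E ⁻¹' {true} ∩ M ⁻¹' {m} ∩ s, Y ω ∂μ := by
      apply setIntegral_congr_ae hmeas
      filter_upwards [hconsY m] with ω h hmem
      exact h hmem.1.1 hmem.1.2
    rw [cE, cE, this]
  have k1 := key true
  have k0 := key false
  rw [hcons]
  linarith [k1, k0]
end

section
/- Sensitivity-analysis identification of the mediation functional: under consistency, exposure ignorability and positivity, E[Y_{1,M_0}] = Σ_{m∈𝒮, x∈𝒳, P(X=x)>0} { E(Y|E=1,M=m,X=x) − t(1,m,x)·(1 − P(M=m|E=1,X=x)) + t(0,m,x)·(1 − P(M=m|E=0,X=x)) } · P(M=m|E=0,X=x) · P(X=x), where t(e,m,x) := E(Y_{1,m} | E=e, M=m, X=x) − E(Y_{1,m} | E=e, M≠m, X=x) is the selection-bias function. -/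
open MeasureTheory ProbabilityTheory

section Helpers
variable {Ω : Type*} [MeasurableSpace Ω] {μ : Measure Ω} {A s : Set Ω}

lemma setIntegral_cond' (hA : MeasurableSet A) (hs : MeasurableSet s) (f : Ω → ℝ) :
    ∫ ω in s, f ω ∂(μ[|A]) = (μ A).toReal⁻¹ * ∫ ω in s ∩ A, f ω ∂μ := by
  rw [ProbabilityTheory.cond, Measure.restrict_smul, integral_smul_measure,
    Measure.restrict_restrict hs, smul_eq_mul, ENNReal.toReal_inv]

lemma integral_cond' (f : Ω → ℝ) :
    ∫ ω, f ω ∂(μ[|A]) = (μ A).toReal⁻¹ * ∫ ω in A, f ω ∂μ := by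
  rw [ProbabilityTheory.cond, integral_smul_measure, smul_eq_mul, ENNReal.toReal_inv]

lemma indep_extract {f : Ω → ℝ} {E : Ω → Bool} {ν : Measure Ω} [IsProbabilityMeasure ν]
    (hind : IndepFun f E ν) (hf : Integrable f ν) (hE : Measurable E) (e : Bool) :
    ∫ ω in E ⁻¹' {e}, f ω ∂ν = (ν (E ⁻¹' {e})).toReal * ∫ ω, f ω ∂ν := by
  classical
  set χ : Bool → ℝ := fun b => if b = e then 1 else 0 with hχ
  have hχm : Measurable χ := Measurable.of_discrete
  have hind2 : IndepFun f (χ ∘ E) ν := hind.comp measurable_id hχm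
  have hχE : (χ ∘ E) = (E ⁻¹' {e}).indicator (fun _ => (1:ℝ)) := by
    ext ω
    by_cases h : E ω = e <;> simp [hχ, Set.indicator, h]
  have hintχ : Integrable (χ ∘ E) ν := by
    rw [hχE]; exact (integrable_const 1).indicator (hE (measurableSet_singleton e))
  have hmul := hind2.integral_mul_eq_mul_integral hf.aestronglyMeasurable hintχ.aestronglyMeasurable
  have h1 : (f * (χ ∘ E)) = (E ⁻¹' {e}).indicator f := by
    ext ω
    by_cases h : E ω = e <;> simp [hχ, Set.indicator, h]
  have h2 : ∫ ω, (f * (χ ∘ E)) ω ∂ν = ∫ ω in E ⁻¹' {e}, f ω ∂ν := by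
    rw [h1, integral_indicator (hE (measurableSet_singleton e))]
  have h3 : ∫ ω, (χ ∘ E) ω ∂ν = (ν (E ⁻¹' {e})).toReal := by
    rw [hχE, integral_indicator (hE (measurableSet_singleton e))]
    simp [Measure.real]
  rw [h2, h3] at hmul
  rw [hmul]; ring

lemma algebra_key (IB0 IB1 aB0 aB1 aC0 aC1 J muA : ℝ)
    (hB0 : aB0 ≠ 0) (hB1 : aB1 ≠ 0) (hC0 : aC0 ≠ 0) (hC1 : aC1 ≠ 0)
    (hA0 : aB0 + aC0 ≠ 0) (hA1 : aB1 + aC1 ≠ 0) :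
    (IB1/aB1 - (IB1/aB1 - ((aB1+aC1)*J - IB1)/aC1)*(1 - aB1/(aB1+aC1))
      + (IB0/aB0 - ((aB0+aC0)*J - IB0)/aC0)*(1 - aB0/(aB0+aC0))) * (aB0/(aB0+aC0)) * muA
    = muA * IB0 / (aB0 + aC0) := by
  field_simp
  ring

/-- The per-`x` identity, with `A` playing the role of the event `{X = x}`. -/
lemma key_x {Ω 𝒮 : Type*} [MeasurableSpace Ω] [Fintype 𝒮] [Nontrivial 𝒮]
    [MeasurableSpace 𝒮] [MeasurableSingletonClass 𝒮]
    (μ : Measure Ω) [IsProbabilityMeasure μ]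
    (M : Ω → 𝒮) (E : Ω → Bool) (Y : Ω → ℝ)
    (hM : Measurable M) (hE : Measurable E)
    (Yc : 𝒮 → Ω → ℝ) (hYc : ∀ m, Integrable (Yc m) μ)
    (M0 : Ω → 𝒮) (hM0 : Measurable M0)
    (A : Set Ω) (hAm : MeasurableSet A) (hx' : μ A ≠ 0)
    (hposE : ∀ e : Bool, μ (E ⁻¹' {e} ∩ A) ≠ 0)
    (hposM : ∀ (m : 𝒮) (e : Bool), μ (M ⁻¹' {m} ∩ E ⁻¹' {e} ∩ A) ≠ 0)
    (hconsY : ∀ m : 𝒮, ∀ᵐ ω ∂μ, E ω = true → M ω = m → Yc m ω = Y ω)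
    (hconsM : ∀ᵐ ω ∂μ, E ω = false → M0 ω = M ω)
    (hind : IndepFun (fun ω => ((fun m => Yc m ω), M0 ω)) E (μ[|A])) :
    ∫ ω in A, Yc (M0 ω) ω ∂μ =
      ∑ m : 𝒮,
        (cE μ Y (E ⁻¹' {true} ∩ M ⁻¹' {m} ∩ A) -
            (cE μ (Yc m) (E ⁻¹' {true} ∩ M ⁻¹' {m} ∩ A) -
              cE μ (Yc m) (E ⁻¹' {true} ∩ {ω | M ω ≠ m} ∩ A)) *
              (1 - cP μ (M ⁻¹' {m}) (E ⁻¹' {true} ∩ A)) +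
            (cE μ (Yc m) (E ⁻¹' {false} ∩ M ⁻¹' {m} ∩ A) -
              cE μ (Yc m) (E ⁻¹' {false} ∩ {ω | M ω ≠ m} ∩ A)) *
              (1 - cP μ (M ⁻¹' {m}) (E ⁻¹' {false} ∩ A))) *
          cP μ (M ⁻¹' {m}) (E ⁻¹' {false} ∩ A) *
          (μ A).toReal := by
  classical
  have mE : ∀ e : Bool, MeasurableSet (E ⁻¹' {e}) := fun e => hE (measurableSet_singleton e)
  have mM : ∀ m : 𝒮, MeasurableSet (M ⁻¹' {m}) := fun m => hM (measurableSet_singleton m)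
  have mMne : ∀ m : 𝒮, MeasurableSet {ω | M ω ≠ m} := fun m => (mM m).compl
  have htoR : ∀ B : Set Ω, μ B ≠ 0 → (μ B).toReal ≠ 0 := fun B hB =>
    ENNReal.toReal_ne_zero.mpr ⟨hB, measure_ne_top μ B⟩
  have hAt : (μ A).toReal ≠ 0 := htoR A hx'
  have hh_int : Integrable (fun ω => Yc (M0 ω) ω) μ := by
    have e1 : (fun ω => Yc (M0 ω) ω) = fun ω => ∑ m : 𝒮, (M0 ⁻¹' {m}).indicator (Yc m) ω := by
      funext ω; simp [Set.indicator_apply]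
    rw [e1]
    exact integrable_finset_sum _ fun m _ => (hYc m).indicator (hM0 (measurableSet_singleton m))
  haveI : IsProbabilityMeasure (μ[|A]) := cond_isProbabilityMeasure hx'
  have int_nu : ∀ f : Ω → ℝ, Integrable f μ → Integrable f (μ[|A]) := fun f hf => by
    rw [ProbabilityTheory.cond]
    exact (hf.restrict).smul_measure (ENNReal.inv_ne_top.mpr hx')
  -- independence of the relevant real random variables from E, under μ[|A]
  have hgm : Measurable (fun p : (𝒮 → ℝ) × 𝒮 => p.1 p.2) := by
    have he : (fun p : (𝒮 → ℝ) × 𝒮 => p.1 p.2)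
        = fun p => ∑ m : 𝒮, if p.2 = m then p.1 m else 0 := by
      funext p; simp
    rw [he]
    refine Finset.measurable_sum _ fun m _ => Measurable.ite ?_
      ((measurable_pi_apply m).comp measurable_fst) measurable_const
    exact measurable_snd (measurableSet_singleton m)
  have hind_h : IndepFun (fun ω => Yc (M0 ω) ω) E (μ[|A]) := by
    have hrep : (fun ω => Yc (M0 ω) ω)
        = (fun p : (𝒮 → ℝ) × 𝒮 => p.1 p.2) ∘ (fun ω => ((fun m => Yc m ω), M0 ω)) := rfl
    rw [hrep]
    exact hind.comp hgm measurable_id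
  have hind_m : ∀ m : 𝒮, IndepFun (Yc m) E (μ[|A]) := fun m => by
    have hrep : Yc m
        = (fun p : (𝒮 → ℝ) × 𝒮 => p.1 m) ∘ (fun ω => ((fun m => Yc m ω), M0 ω)) := rfl
    rw [hrep]
    exact hind.comp ((measurable_pi_apply m).comp measurable_fst) measurable_id
  -- extraction : for f independent of E, ∫_{E=e ∩ A} f dμ = μ(E=e ∩ A).toReal * ∫ f dμ[|A]
  have hextract : ∀ f : Ω → ℝ, Integrable f μ → IndepFun f E (μ[|A]) → ∀ e : Bool,
      ∫ ω in E ⁻¹' {e} ∩ A, f ω ∂μ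
        = (μ (E ⁻¹' {e} ∩ A)).toReal * ∫ ω, f ω ∂(μ[|A]) := by
    intro f hf hif e
    have h1 := indep_extract hif (int_nu f hf) hE e
    rw [setIntegral_cond' hAm (mE e) f, cond_apply hAm μ (E ⁻¹' {e}),
      Set.inter_comm A (E ⁻¹' {e}), ENNReal.toReal_mul, ENNReal.toReal_inv] at h1
    exact mul_left_cancel₀ (inv_ne_zero hAt) (by rw [h1]; ring)
  -- nonvanishing denominators
  have haA : ∀ e : Bool, (μ (E ⁻¹' {e} ∩ A)).toReal ≠ 0 := fun e => htoR _ (hposE e)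
  have hsetB : ∀ (m : 𝒮) (e : Bool),
      M ⁻¹' {m} ∩ (E ⁻¹' {e} ∩ A) = E ⁻¹' {e} ∩ M ⁻¹' {m} ∩ A := by
    intro m e; ext ω; simp only [Set.mem_inter_iff]; tauto
  have haB : ∀ (m : 𝒮) (e : Bool), (μ (E ⁻¹' {e} ∩ M ⁻¹' {m} ∩ A)).toReal ≠ 0 := by
    intro m e
    refine htoR _ fun h0 => hposM m e (measure_mono_null ?_ h0)
    intro ω hω
    simp only [Set.mem_inter_iff, Set.mem_preimage, Set.mem_singleton_iff] at hω ⊢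
    tauto
  have haC : ∀ (m : 𝒮) (e : Bool), (μ (E ⁻¹' {e} ∩ {ω | M ω ≠ m} ∩ A)).toReal ≠ 0 := by
    intro m e
    obtain ⟨m', hm'⟩ := exists_ne m
    refine htoR _ fun h0 => hposM m' e (measure_mono_null ?_ h0)
    intro ω hω
    simp only [Set.mem_inter_iff, Set.mem_preimage, Set.mem_singleton_iff,
      Set.mem_setOf_eq] at hω ⊢
    refine ⟨⟨hω.1.2, ?_⟩, hω.2⟩
    rw [hω.1.1]; exact hm'
  -- partition of E=e ∩ A along M = m / M ≠ m
  have hsetsplit : ∀ (m : 𝒮) (e : Bool),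
      E ⁻¹' {e} ∩ A = (E ⁻¹' {e} ∩ M ⁻¹' {m} ∩ A) ∪ (E ⁻¹' {e} ∩ {ω | M ω ≠ m} ∩ A) := by
    intro m e; ext ω
    simp only [Set.mem_inter_iff, Set.mem_union, Set.mem_preimage, Set.mem_singleton_iff,
      Set.mem_setOf_eq]
    by_cases hMm : M ω = m <;> tauto
  have hdisj : ∀ (m : 𝒮) (e : Bool),
      Disjoint (E ⁻¹' {e} ∩ M ⁻¹' {m} ∩ A) (E ⁻¹' {e} ∩ {ω | M ω ≠ m} ∩ A) := by
    intro m e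
    rw [Set.disjoint_left]
    intro ω h1 h2
    exact h2.1.2 h1.1.2
  have mC : ∀ (m : 𝒮) (e : Bool), MeasurableSet (E ⁻¹' {e} ∩ {ω | M ω ≠ m} ∩ A) :=
    fun m e => ((mE e).inter (mMne m)).inter hAm
  have haAsum : ∀ (m : 𝒮) (e : Bool),
      (μ (E ⁻¹' {e} ∩ A)).toReal
        = (μ (E ⁻¹' {e} ∩ M ⁻¹' {m} ∩ A)).toReal
          + (μ (E ⁻¹' {e} ∩ {ω | M ω ≠ m} ∩ A)).toReal := by
    intro m e
    rw [hsetsplit m e, measure_union (hdisj m e) (mC m e), ENNReal.toReal_add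
      (measure_ne_top μ _) (measure_ne_top μ _)]
  have hIsum : ∀ (m : 𝒮) (e : Bool),
      ∫ ω in E ⁻¹' {e} ∩ A, Yc m ω ∂μ
        = (∫ ω in E ⁻¹' {e} ∩ M ⁻¹' {m} ∩ A, Yc m ω ∂μ)
          + ∫ ω in E ⁻¹' {e} ∩ {ω | M ω ≠ m} ∩ A, Yc m ω ∂μ := by
    intro m e
    rw [hsetsplit m e]
    exact setIntegral_union (hdisj m e) (mC m e) (hYc m).integrableOn (hYc m).integrableOn
  have hkey : ∀ (m : 𝒮) (e : Bool),
      (∫ ω in E ⁻¹' {e} ∩ M ⁻¹' {m} ∩ A, Yc m ω ∂μ)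
        + ∫ ω in E ⁻¹' {e} ∩ {ω | M ω ≠ m} ∩ A, Yc m ω ∂μ
      = (μ (E ⁻¹' {e} ∩ A)).toReal * ∫ ω, Yc m ω ∂(μ[|A]) := by
    intro m e
    rw [← hIsum m e, hextract (Yc m) (hYc m) (hind_m m) e]
  -- the LHS
  have e1 := hextract (fun ω => Yc (M0 ω) ω) hh_int hind_h false
  have e2 : ∫ ω, Yc (M0 ω) ω ∂(μ[|A])
      = (μ A).toReal⁻¹ * ∫ ω in A, Yc (M0 ω) ω ∂μ := integral_cond' _
  have hLHS : ∫ ω in A, Yc (M0 ω) ω ∂μ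
      = (μ A).toReal * ((∫ ω in E ⁻¹' {false} ∩ A, Yc (M0 ω) ω ∂μ)
          / (μ (E ⁻¹' {false} ∩ A)).toReal) := by
    rw [e1, e2, mul_div_cancel_left₀ _ (haA false), ← mul_assoc, mul_inv_cancel₀ hAt, one_mul]
  -- decompose ∫_{E=false ∩ A} along values of M, using consistency of M0
  have hdec : ∫ ω in E ⁻¹' {false} ∩ A, Yc (M0 ω) ω ∂μ
      = ∑ m : 𝒮, ∫ ω in E ⁻¹' {false} ∩ M ⁻¹' {m} ∩ A, Yc m ω ∂μ := by
    have d1 : ∫ ω in E ⁻¹' {false} ∩ A, Yc (M0 ω) ω ∂μ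
        = ∫ ω in E ⁻¹' {false} ∩ A, (∑ m : 𝒮, (M ⁻¹' {m}).indicator (Yc m)) ω ∂μ := by
      refine setIntegral_congr_ae ((mE false).inter hAm) ?_
      filter_upwards [hconsM] with ω hω hmem
      have hEω : E ω = false := hmem.1
      simp only [Finset.sum_apply, Set.indicator_apply, Set.mem_preimage,
        Set.mem_singleton_iff]
      rw [hω hEω, Finset.sum_ite_eq Finset.univ (M ω) (fun m => Yc m ω)]
      simp
    rw [d1]
    have d2 : ∫ ω in E ⁻¹' {false} ∩ A, (∑ m : 𝒮, (M ⁻¹' {m}).indicator (Yc m)) ω ∂μ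
        = ∑ m : 𝒮, ∫ ω in E ⁻¹' {false} ∩ A, (M ⁻¹' {m}).indicator (Yc m) ω ∂μ := by
      simp only [Finset.sum_apply]
      exact integral_finset_sum _ fun m _ => ((hYc m).indicator (mM m)).integrableOn
    rw [d2]
    refine Finset.sum_congr rfl fun m _ => ?_
    rw [setIntegral_indicator (mM m)]
    have hss : (E ⁻¹' {false} ∩ A) ∩ M ⁻¹' {m} = E ⁻¹' {false} ∩ M ⁻¹' {m} ∩ A := by
      ext ω; simp only [Set.mem_inter_iff]; tauto
    rw [hss]
  -- consistency of Y on E = true, M = m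
  have hconsInt : ∀ m : 𝒮,
      ∫ ω in E ⁻¹' {true} ∩ M ⁻¹' {m} ∩ A, Y ω ∂μ
        = ∫ ω in E ⁻¹' {true} ∩ M ⁻¹' {m} ∩ A, Yc m ω ∂μ := by
    intro m
    refine (setIntegral_congr_ae (((mE true).inter (mM m)).inter hAm) ?_).symm
    filter_upwards [hconsY m] with ω hω hmem
    exact hω hmem.1.1 hmem.1.2
  -- put everything together
  rw [hLHS, hdec, div_eq_mul_inv, Finset.sum_mul, Finset.mul_sum]
  refine Finset.sum_congr rfl fun m _ => ?_
  have hIC0 : ∫ ω in E ⁻¹' {false} ∩ {ω | M ω ≠ m} ∩ A, Yc m ω ∂μ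
      = ((μ (E ⁻¹' {false} ∩ M ⁻¹' {m} ∩ A)).toReal
          + (μ (E ⁻¹' {false} ∩ {ω | M ω ≠ m} ∩ A)).toReal) * (∫ ω, Yc m ω ∂(μ[|A]))
        - ∫ ω in E ⁻¹' {false} ∩ M ⁻¹' {m} ∩ A, Yc m ω ∂μ := by
    have h1 := hkey m false
    rw [haAsum m false] at h1
    linarith
  have hIC1 : ∫ ω in E ⁻¹' {true} ∩ {ω | M ω ≠ m} ∩ A, Yc m ω ∂μ
      = ((μ (E ⁻¹' {true} ∩ M ⁻¹' {m} ∩ A)).toReal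
          + (μ (E ⁻¹' {true} ∩ {ω | M ω ≠ m} ∩ A)).toReal) * (∫ ω, Yc m ω ∂(μ[|A]))
        - ∫ ω in E ⁻¹' {true} ∩ M ⁻¹' {m} ∩ A, Yc m ω ∂μ := by
    have h1 := hkey m true
    rw [haAsum m true] at h1
    linarith
  have hA0 : (μ (E ⁻¹' {false} ∩ M ⁻¹' {m} ∩ A)).toReal
      + (μ (E ⁻¹' {false} ∩ {ω | M ω ≠ m} ∩ A)).toReal ≠ 0 := by
    rw [← haAsum m false]; exact haA false
  have hA1 : (μ (E ⁻¹' {true} ∩ M ⁻¹' {m} ∩ A)).toReal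
      + (μ (E ⁻¹' {true} ∩ {ω | M ω ≠ m} ∩ A)).toReal ≠ 0 := by
    rw [← haAsum m true]; exact haA true
  have hALG := algebra_key
    (∫ ω in E ⁻¹' {false} ∩ M ⁻¹' {m} ∩ A, Yc m ω ∂μ)
    (∫ ω in E ⁻¹' {true} ∩ M ⁻¹' {m} ∩ A, Yc m ω ∂μ)
    ((μ (E ⁻¹' {false} ∩ M ⁻¹' {m} ∩ A)).toReal)
    ((μ (E ⁻¹' {true} ∩ M ⁻¹' {m} ∩ A)).toReal)
    ((μ (E ⁻¹' {false} ∩ {ω | M ω ≠ m} ∩ A)).toReal)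
    ((μ (E ⁻¹' {true} ∩ {ω | M ω ≠ m} ∩ A)).toReal)
    (∫ ω, Yc m ω ∂(μ[|A])) ((μ A).toReal)
    (haB m false) (haB m true) (haC m false) (haC m true) hA0 hA1
  rw [← hIC0, ← hIC1] at hALG
  simp only [cE, cP, hsetB m true, hsetB m false, hconsInt m, haAsum m true, haAsum m false]
  linear_combination -hALG

end Helpers

open Classical in
/-- sensitivity-analysis identification of the mediation functional:
under consistency, exposure ignorability and positivity,
`E[Y_{1,M_0}] = Σ_{m,x:P(X=x)>0} {E(Y|E=1,M=m,X=x) − t(1,m,x)·(1−P(M=m|E=1,X=x))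
  + t(0,m,x)·(1−P(M=m|E=0,X=x))}·P(M=m|E=0,X=x)·P(X=x)`. -/
theorem sensitivity_mediation_identification
    {Ω 𝒳 𝒮 : Type*} [MeasurableSpace Ω] [Fintype 𝒳] [Fintype 𝒮] [Nontrivial 𝒮]
    [MeasurableSpace 𝒳] [MeasurableSingletonClass 𝒳]
    [MeasurableSpace 𝒮] [MeasurableSingletonClass 𝒮]
    (μ : Measure Ω) [IsProbabilityMeasure μ]
    (X : Ω → 𝒳) (M : Ω → 𝒮) (E : Ω → Bool) (Y : Ω → ℝ)
    (hX : Measurable X) (hM : Measurable M) (hE : Measurable E)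
    (hY : Integrable Y μ)
    -- counterfactuals: `Yc m = Y_{1,m}` and `M0 = M_0`
    (Yc : 𝒮 → Ω → ℝ) (hYc : ∀ m, Integrable (Yc m) μ)
    (M0 : Ω → 𝒮) (hM0 : Measurable M0)
    -- positivity
    (hposE : ∀ (e : Bool) (x : 𝒳), μ (X ⁻¹' {x}) ≠ 0 → μ (E ⁻¹' {e} ∩ X ⁻¹' {x}) ≠ 0)
    (hposM : ∀ (m : 𝒮) (e : Bool) (x : 𝒳), μ (X ⁻¹' {x}) ≠ 0 →
      μ (M ⁻¹' {m} ∩ E ⁻¹' {e} ∩ X ⁻¹' {x}) ≠ 0)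
    -- consistency
    (hconsY : ∀ m : 𝒮, ∀ᵐ ω ∂μ, E ω = true → M ω = m → Yc m ω = Y ω)
    (hconsM : ∀ᵐ ω ∂μ, E ω = false → M0 ω = M ω)
    -- exposure ignorability: ((Y_{1,m})_{m∈𝒮}, M_0) ⫫ E | X
    (hign : ∀ x : 𝒳, μ (X ⁻¹' {x}) ≠ 0 →
      IndepFun (fun ω => ((fun m => Yc m ω), M0 ω)) E (μ[|X ⁻¹' {x}]))
    -- selection-bias function: t(e,m,x) = E(Y_{1,m}|E=e,M=m,X=x) − E(Y_{1,m}|E=e,M≠m,X=x)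
    (t : Bool → 𝒮 → 𝒳 → ℝ)
    (ht : ∀ (e : Bool) (m : 𝒮) (x : 𝒳),
      t e m x = cE μ (Yc m) (E ⁻¹' {e} ∩ M ⁻¹' {m} ∩ X ⁻¹' {x}) -
        cE μ (Yc m) (E ⁻¹' {e} ∩ {ω | M ω ≠ m} ∩ X ⁻¹' {x})) :
    ∫ ω, Yc (M0 ω) ω ∂μ =
      ∑ m : 𝒮, ∑ x ∈ Finset.univ.filter (fun x => μ (X ⁻¹' {x}) ≠ 0),
        (cE μ Y (E ⁻¹' {true} ∩ M ⁻¹' {m} ∩ X ⁻¹' {x}) -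
            t true m x * (1 - cP μ (M ⁻¹' {m}) (E ⁻¹' {true} ∩ X ⁻¹' {x})) +
            t false m x * (1 - cP μ (M ⁻¹' {m}) (E ⁻¹' {false} ∩ X ⁻¹' {x}))) *
          cP μ (M ⁻¹' {m}) (E ⁻¹' {false} ∩ X ⁻¹' {x}) *
          (μ (X ⁻¹' {x})).toReal := by
  classical
  have mX : ∀ x : 𝒳, MeasurableSet (X ⁻¹' {x}) := fun x => hX (measurableSet_singleton x)
  have hh_int : Integrable (fun ω => Yc (M0 ω) ω) μ := by
    have e1 : (fun ω => Yc (M0 ω) ω) = fun ω => ∑ m : 𝒮, (M0 ⁻¹' {m}).indicator (Yc m) ω := by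
      funext ω; simp [Set.indicator_apply]
    rw [e1]
    exact integrable_finset_sum _ fun m _ => (hYc m).indicator (hM0 (measurableSet_singleton m))
  have hsplitX : ∫ ω, Yc (M0 ω) ω ∂μ = ∑ x : 𝒳, ∫ ω in X ⁻¹' {x}, Yc (M0 ω) ω ∂μ := by
    have e1 : (fun ω => Yc (M0 ω) ω)
        = fun ω => ∑ x : 𝒳, (X ⁻¹' {x}).indicator (fun ω' => Yc (M0 ω') ω') ω := by
      funext ω; simp [Set.indicator_apply]
    calc ∫ ω, Yc (M0 ω) ω ∂μ
        = ∫ ω, ∑ x : 𝒳, (X ⁻¹' {x}).indicator (fun ω' => Yc (M0 ω') ω') ω ∂μ := by rw [← e1]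
      _ = ∑ x : 𝒳, ∫ ω, (X ⁻¹' {x}).indicator (fun ω' => Yc (M0 ω') ω') ω ∂μ :=
          integral_finset_sum _ fun x _ => hh_int.indicator (mX x)
      _ = ∑ x : 𝒳, ∫ ω in X ⁻¹' {x}, Yc (M0 ω) ω ∂μ :=
          Finset.sum_congr rfl fun x _ => integral_indicator (mX x)
  have hfilter : ∑ x : 𝒳, ∫ ω in X ⁻¹' {x}, Yc (M0 ω) ω ∂μ
      = ∑ x ∈ Finset.univ.filter (fun x => μ (X ⁻¹' {x}) ≠ 0),
          ∫ ω in X ⁻¹' {x}, Yc (M0 ω) ω ∂μ := by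
    refine (Finset.sum_filter_of_ne ?_).symm
    intro x _ hfx h0
    exact hfx (by rw [Measure.restrict_eq_zero.mpr h0, integral_zero_measure])
  rw [hsplitX, hfilter, Finset.sum_comm]
  refine Finset.sum_congr rfl fun x hxmem => ?_
  have hx' : μ (X ⁻¹' {x}) ≠ 0 := (Finset.mem_filter.mp hxmem).2
  simp only [ht]
  exact key_x μ M E Y hM hE Yc hYc M0 hM0 (X ⁻¹' {x}) (mX x) hx'
    (fun e => hposE e x hx') (fun m e => hposM m e x hx') hconsY hconsM (hign x hx')
end

section
/- Population double robustness of the sensitivity-analysis estimating functional (population version of Theorem 4): under consistency, exposure ignorability and positivity, with the true selection-bias function t and the true mediator pmf f_M(m|e,x) := P(M=m|E=e,X=x), let b̂ : 𝒮×𝒳 → ℝ and ê : 𝒳 → (0,1) be working models and define η̃(x) := Σ_{m∈𝒮} { b̂(m,x) + t(0,m,x)·(1 − f_M(m|0,x)) − t(1,m,x)·(1 − f_M(m|1,x)) } · f_M(m|0,x). If ê(x) = P(E=1|X=x) for all x with P(X=x) > 0, or b̂(m,x) = E(Y|E=1,M=m,X=x) for all m ∈ 𝒮 and x with P(X=x)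 > 0, then E[ 1{E=1}·f_M(M|0,X)·(Y − b̂(M,X)) / (ê(X)·f_M(M|1,X)) + η̃(X) ] = E[Y_{1,M_0}]. -/
open MeasureTheory ProbabilityTheory

section Aux

variable {Ω : Type*} [MeasurableSpace Ω] {μ : Measure Ω}

lemma dr_algebra_main (p q0 q1 r0 r1 s0 s1 u0 u1 w0 w1 eh B : ℝ)
    (hq0 : r0 + s0 = q0) (hq1 : r1 + s1 = q1) (hp : q0 + q1 = p)
    (hig : (u0 + w0) * q1 = (u1 + w1) * q0)
    (h0 : q0 ≠ 0) (h1 : q1 ≠ 0) (hr0 : r0 ≠ 0) (hr1 : r1 ≠ 0)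
    (hs0 : s0 ≠ 0) (hs1 : s1 ≠ 0) (he : eh ≠ 0) (hpne : p ≠ 0)
    (hdr : eh = q1 / p ∨ B = u1 / r1) :
    r0 / q0 / (eh * (r1 / q1)) * (u1 - B * r1)
      + (B + (u0 / r0 - w0 / s0) * (1 - r0 / q0) - (u1 / r1 - w1 / s1) * (1 - r1 / q1))
          * (r0 / q0) * p
      = u0 * p / q0 := by
  subst hq0 hq1 hp
  have h1' : u1 / r1 - (u1 / r1 - w1 / s1) * (s1 / (r1 + s1)) = (u1 + w1) / (r1 + s1) := by
    field_simp; ring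
  have hig' : (u1 + w1) / (r1 + s1) = (u0 + w0) / (r0 + s0) := by
    rw [div_eq_div_iff h1 h0]; linarith [hig]
  have h3' : ((u0 + w0) / (r0 + s0) + (u0 / r0 - w0 / s0) * (s0 / (r0 + s0))) * (r0 / (r0 + s0))
      = u0 / (r0 + s0) := by
    field_simp; ring
  have hC0 : (u1 / r1 + (u0 / r0 - w0 / s0) * (1 - r0 / (r0 + s0))
      - (u1 / r1 - w1 / s1) * (1 - r1 / (r1 + s1))) * (r0 / (r0 + s0)) = u0 / (r0 + s0) := by
    have hf0 : (1 : ℝ) - r0 / (r0 + s0) = s0 / (r0 + s0) := by field_simp; ring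
    have hf1 : (1 : ℝ) - r1 / (r1 + s1) = s1 / (r1 + s1) := by field_simp; ring
    rw [hf0, hf1]
    calc (u1 / r1 + (u0 / r0 - w0 / s0) * (s0 / (r0 + s0))
          - (u1 / r1 - w1 / s1) * (s1 / (r1 + s1))) * (r0 / (r0 + s0))
        = ((u1 / r1 - (u1 / r1 - w1 / s1) * (s1 / (r1 + s1)))
            + (u0 / r0 - w0 / s0) * (s0 / (r0 + s0))) * (r0 / (r0 + s0)) := by ring
      _ = ((u0 + w0) / (r0 + s0) + (u0 / r0 - w0 / s0) * (s0 / (r0 + s0))) * (r0 / (r0 + s0)) := by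
          rw [h1', hig']
      _ = u0 / (r0 + s0) := h3'
  have key : ∀ C : ℝ, C ≠ 0 →
      r0 / (r0 + s0) / (C * (r1 / (r1 + s1))) * (u1 - B * r1)
      + (B + (u0 / r0 - w0 / s0) * (1 - r0 / (r0 + s0))
          - (u1 / r1 - w1 / s1) * (1 - r1 / (r1 + s1)))
          * (r0 / (r0 + s0)) * (r0 + s0 + (r1 + s1))
      = (r0 / (r0 + s0)) * (u1 / r1 - B) * ((r1 + s1) / C - (r0 + s0 + (r1 + s1)))
        + u0 * (r0 + s0 + (r1 + s1)) / (r0 + s0) := by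
    intro C hC
    have expand : (B + (u0 / r0 - w0 / s0) * (1 - r0 / (r0 + s0))
        - (u1 / r1 - w1 / s1) * (1 - r1 / (r1 + s1)))
        * (r0 / (r0 + s0)) * (r0 + s0 + (r1 + s1))
        = (B - u1 / r1) * (r0 / (r0 + s0)) * (r0 + s0 + (r1 + s1))
          + ((u1 / r1 + (u0 / r0 - w0 / s0) * (1 - r0 / (r0 + s0))
              - (u1 / r1 - w1 / s1) * (1 - r1 / (r1 + s1))) * (r0 / (r0 + s0)))
              * (r0 + s0 + (r1 + s1)) := by ring
    rw [expand, hC0]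
    have hfirst : r0 / (r0 + s0) / (C * (r1 / (r1 + s1))) * (u1 - B * r1)
        = (r0 / (r0 + s0)) * (u1 / r1 - B) * ((r1 + s1) / C) := by
      field_simp
    rw [hfirst]; ring
  rcases hdr with h | h
  · rw [key eh he, h]
    have : (r1 + s1) / ((r1 + s1) / (r0 + s0 + (r1 + s1))) - (r0 + s0 + (r1 + s1)) = 0 := by
      field_simp; ring
    rw [this]; ring
  · rw [key eh he, h]
    have : u1 / r1 - u1 / r1 = 0 := by ring
    rw [this]; ring

lemma dr_integrable_comp_mul {ι : Type*} [Fintype ι] [MeasurableSpace ι]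
    [MeasurableSingletonClass ι] {T : Ω → ι} (hT : Measurable T) (α : ι → ℝ)
    {f : Ω → ℝ} (hf : Integrable f μ) :
    Integrable (fun ω => α (T ω) * f ω) μ := by
  classical
  have heq : (fun ω => α (T ω) * f ω)
      = fun ω => ∑ i : ι, (T ⁻¹' {i}).indicator (fun ω' => α i * f ω') ω := by
    funext ω
    simp only [Set.indicator_apply, Set.mem_preimage, Set.mem_singleton_iff]
    rw [Finset.sum_ite_eq (Finset.univ : Finset ι) (T ω) (fun i => α i * f ω)]
    simp
  rw [heq]
  exact integrable_finset_sum _ fun i _ =>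
    ((hf.const_mul (α i)).indicator (hT (measurableSet_singleton i)))

lemma dr_integral_eq_sum_fibers {ι : Type*} [Fintype ι] [MeasurableSpace ι]
    [MeasurableSingletonClass ι] {T : Ω → ι} (hT : Measurable T)
    {f : Ω → ℝ} (hf : Integrable f μ) :
    ∫ ω, f ω ∂μ = ∑ i : ι, ∫ ω in T ⁻¹' {i}, f ω ∂μ := by
  classical
  have hmeas : ∀ i, MeasurableSet (T ⁻¹' {i}) := fun i => hT (measurableSet_singleton i)
  have hunion : (⋃ i : ι, T ⁻¹' {i}) = Set.univ := by
    ext ω; simp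
  have hdisj : Pairwise (Function.onFun Disjoint fun i : ι => T ⁻¹' {i}) := by
    intro i j hij
    simp only [Function.onFun, Set.disjoint_left, Set.mem_preimage, Set.mem_singleton_iff]
    intro ω hi hj
    exact hij (hi ▸ hj ▸ rfl)
  calc ∫ ω, f ω ∂μ = ∫ ω in ⋃ i : ι, T ⁻¹' {i}, f ω ∂μ := by rw [hunion, setIntegral_univ]
    _ = ∑' i : ι, ∫ ω in T ⁻¹' {i}, f ω ∂μ :=
        integral_iUnion hmeas hdisj (hunion ▸ hf.integrableOn)
    _ = ∑ i : ι, ∫ ω in T ⁻¹' {i}, f ω ∂μ := tsum_fintype _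

lemma dr_factor_lemma [IsProbabilityMeasure μ] {A : Set Ω} (hA : MeasurableSet A) (hA0 : μ A ≠ 0)
    {α : Type*} [MeasurableSpace α] {Z : Ω → α} {W : Ω → Bool}
    (hW : Measurable W)
    (hind : IndepFun Z W (μ[|A]))
    {φ : α → ℝ} (hφ : Measurable φ) (hint : Integrable (fun ω => φ (Z ω)) μ)
    (e : Bool) :
    (∫ ω in A, φ (Z ω) * (if W ω = e then 1 else 0) ∂μ) * (μ A).toReal
      = (∫ ω in A, φ (Z ω) ∂μ) * (μ (W ⁻¹' {e} ∩ A)).toReal := by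
  classical
  set ν : Measure Ω := μ[|A] with hν
  have hAfin : μ A ≠ ⊤ := measure_ne_top μ A
  have hinv_ne_top : (μ A)⁻¹ ≠ ⊤ := ENNReal.inv_ne_top.mpr hA0
  have hsmul : ν = (μ A)⁻¹ • μ.restrict A := rfl
  have hI : ∀ g : Ω → ℝ, ∫ ω, g ω ∂ν = ((μ A).toReal)⁻¹ * ∫ ω in A, g ω ∂μ := by
    intro g
    rw [hsmul, integral_smul_measure, ENNReal.toReal_inv, smul_eq_mul]
  have hψ : Measurable (fun b : Bool => if b = e then (1:ℝ) else 0) := by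
    have : (fun b : Bool => if b = e then (1:ℝ) else 0)
        = ({e} : Set Bool).indicator (fun _ => 1) := by
      funext b; simp [Set.indicator_apply]
    rw [this]
    exact measurable_const.indicator (measurableSet_singleton e)
  have hindc : IndepFun (fun ω => φ (Z ω)) (fun ω => if W ω = e then (1:ℝ) else 0) ν :=
    hind.comp hφ hψ
  have hintν : Integrable (fun ω => φ (Z ω)) ν := by
    rw [hsmul]
    exact (hint.restrict (s := A)).smul_measure hinv_ne_top
  have hWind : (fun ω => if W ω = e then (1:ℝ) else 0)
      = (W ⁻¹' {e}).indicator (fun _ => 1) := by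
    funext ω; simp [Set.indicator_apply]
  have hintψ : Integrable (fun ω => if W ω = e then (1:ℝ) else 0) ν := by
    rw [hWind]
    exact (integrable_const 1).indicator (hW (measurableSet_singleton e))
  have hmul' : ∫ ω, φ (Z ω) * (if W ω = e then 1 else 0) ∂ν
      = (∫ ω, φ (Z ω) ∂ν) * ∫ ω, (if W ω = e then (1:ℝ) else 0) ∂ν :=
    hindc.integral_fun_mul_eq_mul_integral hintν.1 hintψ.1
  have hνW : ∫ ω, (if W ω = e then (1:ℝ) else 0) ∂ν = (ν (W ⁻¹' {e})).toReal := by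
    rw [hWind, integral_indicator_const (1:ℝ) (hW (measurableSet_singleton e)), smul_eq_mul,
      mul_one, measureReal_def]
  have hcond : (ν (W ⁻¹' {e})).toReal = (μ (W ⁻¹' {e} ∩ A)).toReal / (μ A).toReal := by
    rw [hν, cond_apply hA, ENNReal.toReal_mul, ENNReal.toReal_inv, Set.inter_comm]
    ring
  rw [hI, hI, hνW, hcond] at hmul'
  have hp : ((μ A).toReal) ≠ 0 := ENNReal.toReal_ne_zero.mpr ⟨hA0, hAfin⟩
  field_simp at hmul'
  simp only [mul_ite, mul_one, mul_zero] at hmul' ⊢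
  refine mul_right_cancel₀ hp ?_
  linear_combination (μ A).toReal * hmul'

lemma dr_assembly {𝒮 : Type*} [Fintype 𝒮] (p qf qt : ℝ) (r0 r1 u0 u1 k B term : 𝒮 → ℝ) (η : ℝ)
    (hη : η = ∑ m : 𝒮, term m)
    (hr0 : ∑ m : 𝒮, r0 m = qf) (hr1 : ∑ m : 𝒮, r1 m = qt) (hq : qf + qt = p)
    (hper : ∀ m : 𝒮, k m * (u1 m - B m * r1 m) + term m * p = u0 m * p / qf) :
    (∑ m : 𝒮, (k m * u1 m + (η - k m * B m) * r1 m)) + ∑ m : 𝒮, η * r0 m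
      = ∑ m : 𝒮, u0 m * p / qf := by
  have h1 : ∑ m : 𝒮, (k m * u1 m + (η - k m * B m) * r1 m)
      = (∑ m : 𝒮, k m * (u1 m - B m * r1 m)) + η * ∑ m : 𝒮, r1 m := by
    rw [Finset.mul_sum, ← Finset.sum_add_distrib]
    exact Finset.sum_congr rfl fun m _ => by ring
  have h2 : ∑ m : 𝒮, η * r0 m = η * qf := by rw [← Finset.mul_sum, hr0]
  rw [h1, h2, hr1]
  have h3 : (∑ m : 𝒮, k m * (u1 m - B m * r1 m)) + η * qt + η * qf
      = (∑ m : 𝒮, k m * (u1 m - B m * r1 m)) + ∑ m : 𝒮, term m * p := by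
    have h4 : η * qt + η * qf = η * p := by rw [← hq]; ring
    rw [add_assoc, h4, hη, Finset.sum_mul]
  rw [h3, ← Finset.sum_add_distrib]
  exact Finset.sum_congr rfl fun m _ => hper m

end Aux
/-- population double robustness of the sensitivity-analysis estimating
functional: with the true selection-bias function `t` and the true mediator pmf, if the
working exposure model `ê` or the working outcome regression `b̂` is correct, then
`E[1{E=1}·f_M(M|0,X)·(Y − b̂(M,X))/(ê(X)·f_M(M|1,X)) + η̃(X)] = E[Y_{1,M_0}]`. -/
theorem sensitivity_double_robustness
    {Ω 𝒳 𝒮 : Type*} [MeasurableSpace Ω] [Fintype 𝒳] [Fintype 𝒮] [Nontrivial 𝒮]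
    [MeasurableSpace 𝒳] [MeasurableSingletonClass 𝒳]
    [MeasurableSpace 𝒮] [MeasurableSingletonClass 𝒮]
    (μ : Measure Ω) [IsProbabilityMeasure μ]
    (X : Ω → 𝒳) (M : Ω → 𝒮) (E : Ω → Bool) (Y : Ω → ℝ)
    (hX : Measurable X) (hM : Measurable M) (hE : Measurable E)
    (hY : Integrable Y μ)
    -- counterfactuals: `Yc m = Y_{1,m}` and `M0 = M_0`
    (Yc : 𝒮 → Ω → ℝ) (hYc : ∀ m, Integrable (Yc m) μ)
    (M0 : Ω → 𝒮) (hM0 : Measurable M0)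
    -- positivity
    (hposE : ∀ (e : Bool) (x : 𝒳), μ (X ⁻¹' {x}) ≠ 0 → μ (E ⁻¹' {e} ∩ X ⁻¹' {x}) ≠ 0)
    (hposM : ∀ (m : 𝒮) (e : Bool) (x : 𝒳), μ (X ⁻¹' {x}) ≠ 0 →
      μ (M ⁻¹' {m} ∩ E ⁻¹' {e} ∩ X ⁻¹' {x}) ≠ 0)
    -- consistency
    (hconsY : ∀ m : 𝒮, ∀ᵐ ω ∂μ, E ω = true → M ω = m → Yc m ω = Y ω)
    (hconsM : ∀ᵐ ω ∂μ, E ω = false → M0 ω = M ω)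
    -- exposure ignorability: ((Y_{1,m})_{m∈𝒮}, M_0) ⫫ E | X
    (hign : ∀ x : 𝒳, μ (X ⁻¹' {x}) ≠ 0 →
      IndepFun (fun ω => ((fun m => Yc m ω), M0 ω)) E (μ[|X ⁻¹' {x}]))
    -- true selection-bias function
    (t : Bool → 𝒮 → 𝒳 → ℝ)
    (ht : ∀ (e : Bool) (m : 𝒮) (x : 𝒳),
      t e m x = cE μ (Yc m) (E ⁻¹' {e} ∩ M ⁻¹' {m} ∩ X ⁻¹' {x}) -
        cE μ (Yc m) (E ⁻¹' {e} ∩ {ω | M ω ≠ m} ∩ X ⁻¹' {x}))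
    -- working models
    (bhat : 𝒮 → 𝒳 → ℝ) (ehat : 𝒳 → ℝ) (hehat01 : ∀ x, ehat x ∈ Set.Ioo (0:ℝ) 1)
    -- η̃(x) built from b̂, t and the true mediator pmf
    (etatilde : 𝒳 → ℝ)
    (hetatilde : ∀ x, etatilde x =
      ∑ m : 𝒮,
        (bhat m x +
            t false m x * (1 - cP μ (M ⁻¹' {m}) (E ⁻¹' {false} ∩ X ⁻¹' {x})) -
            t true m x * (1 - cP μ (M ⁻¹' {m}) (E ⁻¹' {true} ∩ X ⁻¹' {x}))) *
          cP μ (M ⁻¹' {m}) (E ⁻¹' {false} ∩ X ⁻¹' {x}))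
    -- at least one working model is correct
    (hdr : (∀ x : 𝒳, μ (X ⁻¹' {x}) ≠ 0 → ehat x = cP μ (E ⁻¹' {true}) (X ⁻¹' {x})) ∨
      (∀ (m : 𝒮) (x : 𝒳), μ (X ⁻¹' {x}) ≠ 0 →
        bhat m x = cE μ Y (E ⁻¹' {true} ∩ M ⁻¹' {m} ∩ X ⁻¹' {x}))) :
    ∫ ω,
        ((if E ω then (1:ℝ) else 0) *
            cP μ (M ⁻¹' {M ω}) (E ⁻¹' {false} ∩ X ⁻¹' {X ω}) *
            (Y ω - bhat (M ω) (X ω)) /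
            (ehat (X ω) * cP μ (M ⁻¹' {M ω}) (E ⁻¹' {true} ∩ X ⁻¹' {X ω})) +
          etatilde (X ω)) ∂μ = ∫ ω, Yc (M0 ω) ω ∂μ := by
  classical
  -- the discrete triple map and the decomposition of the estimating function
  set T : Ω → Bool × 𝒮 × 𝒳 := fun ω => (E ω, M ω, X ω) with hTdef
  have hTmeas : Measurable T := hE.prodMk (hM.prodMk hX)
  set α : Bool × 𝒮 × 𝒳 → ℝ := fun pr =>
    (if pr.1 then (1:ℝ) else 0) * cP μ (M ⁻¹' {pr.2.1}) (E ⁻¹' {false} ∩ X ⁻¹' {pr.2.2}) /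
      (ehat pr.2.2 * cP μ (M ⁻¹' {pr.2.1}) (E ⁻¹' {true} ∩ X ⁻¹' {pr.2.2})) with hαdef
  set γ : Bool × 𝒮 × 𝒳 → ℝ := fun pr => -(α pr * bhat pr.2.1 pr.2.2) + etatilde pr.2.2 with hγdef
  set F : Ω → ℝ := fun ω =>
    (if E ω then (1:ℝ) else 0) *
            cP μ (M ⁻¹' {M ω}) (E ⁻¹' {false} ∩ X ⁻¹' {X ω}) *
            (Y ω - bhat (M ω) (X ω)) /
            (ehat (X ω) * cP μ (M ⁻¹' {M ω}) (E ⁻¹' {true} ∩ X ⁻¹' {X ω})) +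
          etatilde (X ω) with hFdef
  have hFdecomp : F = fun ω => α (T ω) * Y ω + γ (T ω) * 1 := by
    funext ω
    simp only [hFdef, hαdef, hγdef, hTdef]
    ring
  have hFint : Integrable F μ := by
    rw [hFdecomp]
    exact (dr_integrable_comp_mul hTmeas α hY).add
      (dr_integrable_comp_mul hTmeas γ (integrable_const 1))
  set G : Ω → ℝ := fun ω => Yc (M0 ω) ω with hGdef
  have hGdecomp : G = fun ω => ∑ m : 𝒮, (if M0 ω = m then (1:ℝ) else 0) * Yc m ω := by
    funext ω
    rw [hGdef]
    rw [Finset.sum_eq_single_of_mem (M0 ω) (Finset.mem_univ _)]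
    · simp
    · intro b _ hb
      rw [if_neg (Ne.symm hb), zero_mul]
  have hGint : Integrable G μ := by
    rw [hGdecomp]
    exact integrable_finset_sum _ fun m _ =>
      dr_integrable_comp_mul hM0 (fun m' => if m' = m then (1:ℝ) else 0) (hYc m)
  rw [dr_integral_eq_sum_fibers hX hFint, dr_integral_eq_sum_fibers hX hGint]
  refine Finset.sum_congr rfl fun x _ => ?_
  by_cases hx : μ (X ⁻¹' {x}) = 0
  · rw [Measure.restrict_eq_zero.mpr hx]
    simp
  -- ============ main per-fiber case ============
  -- measurability of the basic events
  have hmA : MeasurableSet (X ⁻¹' {x}) := hX (measurableSet_singleton x)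
  have hmE : ∀ e : Bool, MeasurableSet (E ⁻¹' {e}) := fun e => hE (measurableSet_singleton e)
  have hmM : ∀ m : 𝒮, MeasurableSet (M ⁻¹' {m}) := fun m => hM (measurableSet_singleton m)
  have hmMc : ∀ m : 𝒮, MeasurableSet {ω | M ω ≠ m} := by
    intro m
    have : {ω | M ω ≠ m} = (M ⁻¹' {m})ᶜ := by ext ω; simp
    rw [this]; exact (hmM m).compl
  have hmQ : ∀ e : Bool, MeasurableSet (E ⁻¹' {e} ∩ X ⁻¹' {x}) := fun e => (hmE e).inter hmA
  have hmS : ∀ (e : Bool) (m : 𝒮), MeasurableSet (E ⁻¹' {e} ∩ M ⁻¹' {m} ∩ X ⁻¹' {x}) :=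
    fun e m => ((hmE e).inter (hmM m)).inter hmA
  have hmSc : ∀ (e : Bool) (m : 𝒮), MeasurableSet (E ⁻¹' {e} ∩ {ω | M ω ≠ m} ∩ X ⁻¹' {x}) :=
    fun e m => ((hmE e).inter (hmMc m)).inter hmA
  -- nonvanishing real masses
  have tr_ne : ∀ {S : Set Ω}, μ S ≠ 0 → (μ S).toReal ≠ 0 :=
    fun h => ENNReal.toReal_ne_zero.mpr ⟨h, measure_ne_top μ _⟩
  have hp : (μ (X ⁻¹' {x})).toReal ≠ 0 := tr_ne hx
  have hq : ∀ e : Bool, (μ (E ⁻¹' {e} ∩ X ⁻¹' {x})).toReal ≠ 0 := fun e => tr_ne (hposE e x hx)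
  have hSeq : ∀ (e : Bool) (m : 𝒮), M ⁻¹' {m} ∩ E ⁻¹' {e} ∩ X ⁻¹' {x}
      = E ⁻¹' {e} ∩ M ⁻¹' {m} ∩ X ⁻¹' {x} := by
    intro e m; rw [Set.inter_comm (M ⁻¹' {m}) (E ⁻¹' {e})]
  have hr : ∀ (e : Bool) (m : 𝒮), (μ (E ⁻¹' {e} ∩ M ⁻¹' {m} ∩ X ⁻¹' {x})).toReal ≠ 0 :=
    fun e m => tr_ne (by rw [← hSeq]; exact hposM m e x hx)
  have hs : ∀ (e : Bool) (m : 𝒮), (μ (E ⁻¹' {e} ∩ {ω | M ω ≠ m} ∩ X ⁻¹' {x})).toReal ≠ 0 := by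
    intro e m
    obtain ⟨m', hm'⟩ := exists_ne m
    refine tr_ne fun h0 => ?_
    have hsub : E ⁻¹' {e} ∩ M ⁻¹' {m'} ∩ X ⁻¹' {x}
        ⊆ E ⁻¹' {e} ∩ {ω | M ω ≠ m} ∩ X ⁻¹' {x} := by
      rintro ω ⟨⟨h1, h2⟩, h3⟩
      refine ⟨⟨h1, ?_⟩, h3⟩
      have hMω : M ω = m' := h2
      simp only [Set.mem_setOf_eq, hMω]
      exact hm'
    have hle := measure_mono (μ := μ) hsub
    rw [h0] at hle
    exact hposM m' e x hx (by rw [hSeq]; exact le_antisymm hle zero_le)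
  -- additivity
  have hadd_q : (μ (E ⁻¹' {false} ∩ X ⁻¹' {x})).toReal
      + (μ (E ⁻¹' {true} ∩ X ⁻¹' {x})).toReal = (μ (X ⁻¹' {x})).toReal := by
    have hun : (E ⁻¹' {false} ∩ X ⁻¹' {x}) ∪ (E ⁻¹' {true} ∩ X ⁻¹' {x}) = X ⁻¹' {x} := by
      ext ω; by_cases hEω : E ω <;> simp [Set.mem_preimage, hEω]
    have hdis : Disjoint (E ⁻¹' {false} ∩ X ⁻¹' {x}) (E ⁻¹' {true} ∩ X ⁻¹' {x}) := by
      rw [Set.disjoint_left]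
      rintro ω ⟨h1, _⟩ ⟨h2, _⟩
      simp only [Set.mem_preimage, Set.mem_singleton_iff] at h1 h2
      rw [h1] at h2; exact Bool.false_ne_true h2
    rw [← ENNReal.toReal_add (measure_ne_top μ _) (measure_ne_top μ _),
      ← measure_union hdis (hmQ true), hun]
  have hadd_rs : ∀ (e : Bool) (m : 𝒮),
      (μ (E ⁻¹' {e} ∩ M ⁻¹' {m} ∩ X ⁻¹' {x})).toReal
        + (μ (E ⁻¹' {e} ∩ {ω | M ω ≠ m} ∩ X ⁻¹' {x})).toReal
      = (μ (E ⁻¹' {e} ∩ X ⁻¹' {x})).toReal := by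
    intro e m
    have hun : (E ⁻¹' {e} ∩ M ⁻¹' {m} ∩ X ⁻¹' {x}) ∪ (E ⁻¹' {e} ∩ {ω | M ω ≠ m} ∩ X ⁻¹' {x})
        = E ⁻¹' {e} ∩ X ⁻¹' {x} := by
      ext ω
      by_cases hMω : M ω = m <;>
        simp only [Set.mem_union, Set.mem_inter_iff, Set.mem_preimage, Set.mem_singleton_iff,
          Set.mem_setOf_eq, hMω] <;> tauto
    have hdis : Disjoint (E ⁻¹' {e} ∩ M ⁻¹' {m} ∩ X ⁻¹' {x})
        (E ⁻¹' {e} ∩ {ω | M ω ≠ m} ∩ X ⁻¹' {x}) := by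
      rw [Set.disjoint_left]
      rintro ω ⟨⟨_, h2⟩, _⟩ ⟨⟨_, h3⟩, _⟩
      exact h3 h2
    rw [← ENNReal.toReal_add (measure_ne_top μ _) (measure_ne_top μ _),
      ← measure_union hdis (hmSc e m), hun]
  have hsum_r : ∀ e : Bool, ∑ m : 𝒮, (μ (E ⁻¹' {e} ∩ M ⁻¹' {m} ∩ X ⁻¹' {x})).toReal
      = (μ (E ⁻¹' {e} ∩ X ⁻¹' {x})).toReal := by
    intro e
    have hun : (⋃ m : 𝒮, E ⁻¹' {e} ∩ M ⁻¹' {m} ∩ X ⁻¹' {x}) = E ⁻¹' {e} ∩ X ⁻¹' {x} := by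
      ext ω
      simp only [Set.mem_iUnion, Set.mem_inter_iff, Set.mem_preimage, Set.mem_singleton_iff]
      constructor
      · rintro ⟨m, ⟨⟨h1, _⟩, h3⟩⟩; exact ⟨h1, h3⟩
      · rintro ⟨h1, h3⟩; exact ⟨M ω, ⟨⟨h1, rfl⟩, h3⟩⟩
    have hdisj : Pairwise (Function.onFun Disjoint
        fun m : 𝒮 => E ⁻¹' {e} ∩ M ⁻¹' {m} ∩ X ⁻¹' {x}) := by
      intro i j hij
      simp only [Function.onFun, Set.disjoint_left]
      rintro ω ⟨⟨_, h2⟩, _⟩ ⟨⟨_, h3⟩, _⟩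
      have h2' : M ω = i := h2
      have h3' : M ω = j := h3
      exact hij (h2' ▸ h3' ▸ rfl)
    rw [← hun, measure_iUnion hdisj (fun m => hmS e m), tsum_fintype,
      ENNReal.toReal_sum (fun m _ => measure_ne_top μ _)]
  -- consistency for Y on the treated strata
  have hu1 : ∀ m : 𝒮, ∫ ω in E ⁻¹' {true} ∩ M ⁻¹' {m} ∩ X ⁻¹' {x}, Y ω ∂μ
      = ∫ ω in E ⁻¹' {true} ∩ M ⁻¹' {m} ∩ X ⁻¹' {x}, Yc m ω ∂μ := by
    intro m
    refine setIntegral_congr_ae (hmS true m) ?_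
    filter_upwards [hconsY m] with ω hω hmem
    exact (hω hmem.1.1 hmem.1.2).symm
  -- ignorability, factorized at the μ level
  have hfacY : ∀ (e : Bool) (m : 𝒮),
      (∫ ω in X ⁻¹' {x}, Yc m ω * (if E ω = e then 1 else 0) ∂μ) * (μ (X ⁻¹' {x})).toReal
      = (∫ ω in X ⁻¹' {x}, Yc m ω ∂μ) * (μ (E ⁻¹' {e} ∩ X ⁻¹' {x})).toReal := by
    intro e m
    exact dr_factor_lemma hmA hx hE (hign x hx)
      (φ := fun pr : (𝒮 → ℝ) × 𝒮 => pr.1 m)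
      ((measurable_pi_apply m).comp measurable_fst) (hYc m) e
  have hfacM0 : ∀ m : 𝒮,
      (∫ ω in X ⁻¹' {x}, ((if M0 ω = m then (1:ℝ) else 0) * Yc m ω)
          * (if E ω = false then 1 else 0) ∂μ) * (μ (X ⁻¹' {x})).toReal
      = (∫ ω in X ⁻¹' {x}, (if M0 ω = m then (1:ℝ) else 0) * Yc m ω ∂μ)
          * (μ (E ⁻¹' {false} ∩ X ⁻¹' {x})).toReal := by
    intro m
    have hφm : Measurable (fun pr : (𝒮 → ℝ) × 𝒮 => (if pr.2 = m then (1:ℝ) else 0) * pr.1 m) := by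
      refine Measurable.mul ?_ ((measurable_pi_apply m).comp measurable_fst)
      exact Measurable.ite (measurable_snd (measurableSet_singleton m)) measurable_const
        measurable_const
    have hintm : Integrable (fun ω => (if M0 ω = m then (1:ℝ) else 0) * Yc m ω) μ :=
      dr_integrable_comp_mul hM0 (fun m' => if m' = m then (1:ℝ) else 0) (hYc m)
    exact dr_factor_lemma hmA hx hE (hign x hx)
      (φ := fun pr : (𝒮 → ℝ) × 𝒮 => (if pr.2 = m then (1:ℝ) else 0) * pr.1 m) hφm hintm false
  -- splitting ∫_A Yc·1{E=e} over the mediator strata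
  have hv : ∀ (e : Bool) (m : 𝒮),
      ∫ ω in X ⁻¹' {x}, Yc m ω * (if E ω = e then 1 else 0) ∂μ
      = (∫ ω in E ⁻¹' {e} ∩ M ⁻¹' {m} ∩ X ⁻¹' {x}, Yc m ω ∂μ)
        + ∫ ω in E ⁻¹' {e} ∩ {ω | M ω ≠ m} ∩ X ⁻¹' {x}, Yc m ω ∂μ := by
    intro e m
    have h1 : ∫ ω in X ⁻¹' {x}, Yc m ω * (if E ω = e then 1 else 0) ∂μ
        = ∫ ω in X ⁻¹' {x}, (E ⁻¹' {e}).indicator (Yc m) ω ∂μ := by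
      refine setIntegral_congr_ae hmA (Filter.Eventually.of_forall fun ω _ => ?_)
      by_cases hEω : E ω = e
      · simp [Set.indicator_apply, hEω]
      · simp [Set.indicator_apply, hEω]
    rw [h1, setIntegral_indicator (hmE e)]
    have h2 : X ⁻¹' {x} ∩ E ⁻¹' {e}
        = (E ⁻¹' {e} ∩ M ⁻¹' {m} ∩ X ⁻¹' {x}) ∪ (E ⁻¹' {e} ∩ {ω | M ω ≠ m} ∩ X ⁻¹' {x}) := by
      ext ω
      by_cases hMω : M ω = m <;>
        simp only [Set.mem_union, Set.mem_inter_iff, Set.mem_preimage, Set.mem_singleton_iff,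
          Set.mem_setOf_eq, hMω] <;> tauto
    rw [h2]
    refine setIntegral_union ?_ (hmSc e m) ((hYc m).integrableOn) ((hYc m).integrableOn)
    rw [Set.disjoint_left]
    rintro ω ⟨⟨_, h2'⟩, _⟩ ⟨⟨_, h3'⟩, _⟩
    exact h3' h2'
  -- total mass of Yc over the fiber
  have hYχ : ∀ (e : Bool) (m : 𝒮),
      Integrable (fun ω => Yc m ω * (if E ω = e then 1 else 0)) μ := fun e m =>
    (dr_integrable_comp_mul hE (fun b => if b = e then (1:ℝ) else 0) (hYc m)).congr
      (Filter.Eventually.of_forall fun ω => mul_comm _ _)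
  have htot : ∀ m : 𝒮, ∫ ω in X ⁻¹' {x}, Yc m ω ∂μ
      = (∫ ω in X ⁻¹' {x}, Yc m ω * (if E ω = false then 1 else 0) ∂μ)
        + ∫ ω in X ⁻¹' {x}, Yc m ω * (if E ω = true then 1 else 0) ∂μ := by
    intro m
    have hpt : ∀ ω, Yc m ω = Yc m ω * (if E ω = false then 1 else 0)
        + Yc m ω * (if E ω = true then 1 else 0) := by
      intro ω; by_cases hEω : E ω <;> simp [hEω]
    rw [setIntegral_congr_ae hmA (Filter.Eventually.of_forall fun ω _ => hpt ω),
      integral_add ((hYχ false m).integrableOn) ((hYχ true m).integrableOn)]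
  -- the exchangeability relation used in the algebra
  have hig_rel : ∀ m : 𝒮,
      ((∫ ω in E ⁻¹' {false} ∩ M ⁻¹' {m} ∩ X ⁻¹' {x}, Yc m ω ∂μ)
        + ∫ ω in E ⁻¹' {false} ∩ {ω | M ω ≠ m} ∩ X ⁻¹' {x}, Yc m ω ∂μ)
        * (μ (E ⁻¹' {true} ∩ X ⁻¹' {x})).toReal
      = ((∫ ω in E ⁻¹' {true} ∩ M ⁻¹' {m} ∩ X ⁻¹' {x}, Yc m ω ∂μ)
        + ∫ ω in E ⁻¹' {true} ∩ {ω | M ω ≠ m} ∩ X ⁻¹' {x}, Yc m ω ∂μ)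
        * (μ (E ⁻¹' {false} ∩ X ⁻¹' {x})).toReal := by
    intro m
    have h0 := hfacY false m
    have h1 := hfacY true m
    rw [htot m, hv false m, hv true m] at h0 h1
    refine mul_left_cancel₀ hp ?_
    linear_combination (μ (E ⁻¹' {true} ∩ X ⁻¹' {x})).toReal * h0
      - (μ (E ⁻¹' {false} ∩ X ⁻¹' {x})).toReal * h1
  -- the RHS integrand on the fiber, via consistency of M0
  have hWm : ∀ m : 𝒮,
      ∫ ω in X ⁻¹' {x}, ((if M0 ω = m then (1:ℝ) else 0) * Yc m ω)
          * (if E ω = false then 1 else 0) ∂μ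
      = ∫ ω in E ⁻¹' {false} ∩ M ⁻¹' {m} ∩ X ⁻¹' {x}, Yc m ω ∂μ := by
    intro m
    have h1 : ∫ ω in X ⁻¹' {x}, ((if M0 ω = m then (1:ℝ) else 0) * Yc m ω)
          * (if E ω = false then 1 else 0) ∂μ
        = ∫ ω in X ⁻¹' {x}, (E ⁻¹' {false} ∩ M ⁻¹' {m}).indicator (Yc m) ω ∂μ := by
      refine setIntegral_congr_ae hmA ?_
      filter_upwards [hconsM] with ω hω _
      by_cases hEω : E ω = false
      · rw [hω hEω]
        by_cases hMω : M ω = m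
        · simp [Set.indicator_apply, hEω, hMω]
        · simp [Set.indicator_apply, hEω, hMω]
      · simp [Set.indicator_apply, hEω]
    rw [h1, setIntegral_indicator ((hmE false).inter (hmM m))]
    congr 1
    rw [Set.inter_comm]
  -- RHS on the fiber
  have hRHSx : ∫ ω in X ⁻¹' {x}, G ω ∂μ
      = ∑ m : 𝒮, ∫ ω in X ⁻¹' {x}, (if M0 ω = m then (1:ℝ) else 0) * Yc m ω ∂μ := by
    rw [hGdecomp]
    exact integral_finset_sum _ fun m _ =>
      (dr_integrable_comp_mul hM0 (fun m' => if m' = m then (1:ℝ) else 0) (hYc m)).integrableOn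
  have hWval : ∀ m : 𝒮, ∫ ω in X ⁻¹' {x}, (if M0 ω = m then (1:ℝ) else 0) * Yc m ω ∂μ
      = (∫ ω in E ⁻¹' {false} ∩ M ⁻¹' {m} ∩ X ⁻¹' {x}, Yc m ω ∂μ)
          * (μ (X ⁻¹' {x})).toReal / (μ (E ⁻¹' {false} ∩ X ⁻¹' {x})).toReal := by
    intro m
    have h := hfacM0 m
    rw [hWm m] at h
    rw [eq_div_iff (hq false)]
    linear_combination -h
  -- LHS on the fiber: decompose over (E, M) strata
  have hpre : ∀ em : Bool × 𝒮, (fun ω => (E ω, M ω)) ⁻¹' {em} = E ⁻¹' {em.1} ∩ M ⁻¹' {em.2} := by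
    intro em; ext ω; simp [Prod.ext_iff]
  have hPmeas : Measurable (fun ω => (E ω, M ω)) := hE.prodMk hM
  have hLHSx : ∫ ω in X ⁻¹' {x}, F ω ∂μ
      = ∑ em : Bool × 𝒮, ∫ ω in E ⁻¹' {em.1} ∩ M ⁻¹' {em.2} ∩ X ⁻¹' {x}, F ω ∂μ := by
    rw [dr_integral_eq_sum_fibers hPmeas hFint.restrict]
    refine Finset.sum_congr rfl fun em _ => ?_
    rw [Measure.restrict_restrict (hPmeas (measurableSet_singleton em)), hpre]
  have hfalse_strat : ∀ m : 𝒮, ∫ ω in E ⁻¹' {false} ∩ M ⁻¹' {m} ∩ X ⁻¹' {x}, F ω ∂μ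
      = etatilde x * (μ (E ⁻¹' {false} ∩ M ⁻¹' {m} ∩ X ⁻¹' {x})).toReal := by
    intro m
    have h1 : ∫ ω in E ⁻¹' {false} ∩ M ⁻¹' {m} ∩ X ⁻¹' {x}, F ω ∂μ
        = ∫ _ω in E ⁻¹' {false} ∩ M ⁻¹' {m} ∩ X ⁻¹' {x}, etatilde x ∂μ := by
      refine setIntegral_congr_ae (hmS false m) (Filter.Eventually.of_forall fun ω hω => ?_)
      have hEω : E ω = false := hω.1.1
      have hXω : X ω = x := hω.2
      rw [hFdef]
      simp [hEω, hXω]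
    rw [h1, setIntegral_const, smul_eq_mul, mul_comm, measureReal_def]
  have htrue_strat : ∀ m : 𝒮, ∫ ω in E ⁻¹' {true} ∩ M ⁻¹' {m} ∩ X ⁻¹' {x}, F ω ∂μ
      = cP μ (M ⁻¹' {m}) (E ⁻¹' {false} ∩ X ⁻¹' {x})
          / (ehat x * cP μ (M ⁻¹' {m}) (E ⁻¹' {true} ∩ X ⁻¹' {x}))
          * (∫ ω in E ⁻¹' {true} ∩ M ⁻¹' {m} ∩ X ⁻¹' {x}, Y ω ∂μ)
        + (etatilde x - cP μ (M ⁻¹' {m}) (E ⁻¹' {false} ∩ X ⁻¹' {x})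
          / (ehat x * cP μ (M ⁻¹' {m}) (E ⁻¹' {true} ∩ X ⁻¹' {x})) * bhat m x)
          * (μ (E ⁻¹' {true} ∩ M ⁻¹' {m} ∩ X ⁻¹' {x})).toReal := by
    intro m
    have h1 : ∫ ω in E ⁻¹' {true} ∩ M ⁻¹' {m} ∩ X ⁻¹' {x}, F ω ∂μ
        = ∫ ω in E ⁻¹' {true} ∩ M ⁻¹' {m} ∩ X ⁻¹' {x},
            (cP μ (M ⁻¹' {m}) (E ⁻¹' {false} ∩ X ⁻¹' {x})
              / (ehat x * cP μ (M ⁻¹' {m}) (E ⁻¹' {true} ∩ X ⁻¹' {x})) * Y ω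
            + (etatilde x - cP μ (M ⁻¹' {m}) (E ⁻¹' {false} ∩ X ⁻¹' {x})
              / (ehat x * cP μ (M ⁻¹' {m}) (E ⁻¹' {true} ∩ X ⁻¹' {x})) * bhat m x)) ∂μ := by
      refine setIntegral_congr_ae (hmS true m) (Filter.Eventually.of_forall fun ω hω => ?_)
      have hEω : E ω = true := hω.1.1
      have hMω : M ω = m := hω.1.2
      have hXω : X ω = x := hω.2
      rw [hFdef]
      simp only [hEω, hMω, hXω, eq_self_iff_true, if_true]
      ring
    rw [h1, integral_add ((hY.integrableOn).const_mul _)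
      (integrableOn_const (measure_ne_top μ _)),
      integral_const_mul, setIntegral_const, smul_eq_mul, measureReal_def]
    ring
  -- put everything together
  rw [hLHSx, hRHSx]
  simp only [Fintype.sum_prod_type, Fintype.sum_bool]
  simp only [htrue_strat, hfalse_strat, hWval]
  have hseteq2 : ∀ (e : Bool) (m : 𝒮), M ⁻¹' {m} ∩ (E ⁻¹' {e} ∩ X ⁻¹' {x})
      = E ⁻¹' {e} ∩ M ⁻¹' {m} ∩ X ⁻¹' {x} := by
    intro e m; rw [← Set.inter_assoc, Set.inter_comm (M ⁻¹' {m}) (E ⁻¹' {e})]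
  have hper : ∀ m : 𝒮,
      cP μ (M ⁻¹' {m}) (E ⁻¹' {false} ∩ X ⁻¹' {x})
          / (ehat x * cP μ (M ⁻¹' {m}) (E ⁻¹' {true} ∩ X ⁻¹' {x}))
          * ((∫ ω in E ⁻¹' {true} ∩ M ⁻¹' {m} ∩ X ⁻¹' {x}, Y ω ∂μ)
            - bhat m x * (μ (E ⁻¹' {true} ∩ M ⁻¹' {m} ∩ X ⁻¹' {x})).toReal)
        + (bhat m x
            + t false m x * (1 - cP μ (M ⁻¹' {m}) (E ⁻¹' {false} ∩ X ⁻¹' {x}))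
            - t true m x * (1 - cP μ (M ⁻¹' {m}) (E ⁻¹' {true} ∩ X ⁻¹' {x})))
            * cP μ (M ⁻¹' {m}) (E ⁻¹' {false} ∩ X ⁻¹' {x}) * (μ (X ⁻¹' {x})).toReal
      = (∫ ω in E ⁻¹' {false} ∩ M ⁻¹' {m} ∩ X ⁻¹' {x}, Yc m ω ∂μ)
          * (μ (X ⁻¹' {x})).toReal / (μ (E ⁻¹' {false} ∩ X ⁻¹' {x})).toReal := by
    intro m
    have hdr' : ehat x = (μ (E ⁻¹' {true} ∩ X ⁻¹' {x})).toReal / (μ (X ⁻¹' {x})).toReal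
        ∨ bhat m x = (∫ ω in E ⁻¹' {true} ∩ M ⁻¹' {m} ∩ X ⁻¹' {x}, Yc m ω ∂μ)
            / (μ (E ⁻¹' {true} ∩ M ⁻¹' {m} ∩ X ⁻¹' {x})).toReal := by
      rcases hdr with h | h
      · left; rw [h x hx]; simp only [cP]
      · right; rw [h m x hx]; simp only [cE]; rw [hu1 m]
    rw [hu1 m]
    simp only [ht, cE, cP, hseteq2]
    exact dr_algebra_main (μ (X ⁻¹' {x})).toReal _ _ _ _ _ _ _ _ _ _ (ehat x) (bhat m x)
      (hadd_rs false m) (hadd_rs true m) hadd_q (hig_rel m)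
      (hq false) (hq true) (hr false m) (hr true m) (hs false m) (hs true m)
      (ne_of_gt (hehat01 x).1) hp hdr'
  exact dr_assembly (μ (X ⁻¹' {x})).toReal (μ (E ⁻¹' {false} ∩ X ⁻¹' {x})).toReal
    (μ (E ⁻¹' {true} ∩ X ⁻¹' {x})).toReal
    (fun m => (μ (E ⁻¹' {false} ∩ M ⁻¹' {m} ∩ X ⁻¹' {x})).toReal)
    (fun m => (μ (E ⁻¹' {true} ∩ M ⁻¹' {m} ∩ X ⁻¹' {x})).toReal)
    (fun m => ∫ ω in E ⁻¹' {false} ∩ M ⁻¹' {m} ∩ X ⁻¹' {x}, Yc m ω ∂μ)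
    (fun m => ∫ ω in E ⁻¹' {true} ∩ M ⁻¹' {m} ∩ X ⁻¹' {x}, Y ω ∂μ)
    (fun m => cP μ (M ⁻¹' {m}) (E ⁻¹' {false} ∩ X ⁻¹' {x})
      / (ehat x * cP μ (M ⁻¹' {m}) (E ⁻¹' {true} ∩ X ⁻¹' {x})))
    (fun m => bhat m x)
    (fun m => (bhat m x
        + t false m x * (1 - cP μ (M ⁻¹' {m}) (E ⁻¹' {false} ∩ X ⁻¹' {x}))
        - t true m x * (1 - cP μ (M ⁻¹' {m}) (E ⁻¹' {true} ∩ X ⁻¹' {x})))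
        * cP μ (M ⁻¹' {m}) (E ⁻¹' {false} ∩ X ⁻¹' {x}))
    (etatilde x) (hetatilde x) (hsum_r false) (hsum_r true) hadd_q hper
end
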